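/- Let A_m, P, Q be real n×n matrices with P symmetric, A_mᵀP + P·A_m = -Q, and suppose ⟪x, Q·x⟫ ≥ 0 for every x ∈ ℝ^n. Let B be a real n×m matrix, γ > 0 a real number, and Φ : ℝ → (m×p real matrices) any function. Let e : ℝ → ℝ^n and θ̃ : ℝ → ℝ^p be differentiable functions such that for all t ≥ 0: (i) e'(t) = A_m·e(t) + B·(Φ(t)·θ̃(t)), and (ii) ⟪θ̃(t), θ̃'(t)⟫ ≤ -γ·⟪θ̃(t), Φ(t)ᵀ·Bᵀ·P·e(t)⟫. Define V(t) = ⟪e(t), P·e(t)⟫ + ‖θ̃(t)‖²/γ. Then V(t) ≤ V(s) for all 0 ≤ s ≤ t; moreover, if μ > 0 satisfies ⟪x, P·x⟫ ≥ μ·‖x‖² for all x, then ‖e(t)‖² ≤ V(0)/μ for all t ≥ 0. -/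

import Mathlib

open scoped RealInnerProductSpace Matrix
set_option maxHeartbeats 1000000

private lemma inner_eq_dot {n : ℕ} (x y : EuclideanSpace ℝ (Fin n)) :
    ⟪x, y⟫ = (x : Fin n → ℝ) ⬝ᵥ (y : Fin n → ℝ) := by
  simp [PiLp.inner_apply, dotProduct, mul_comm]

private lemma dot_mulVec_left {k l : ℕ} (A : Matrix (Fin k) (Fin l) ℝ)
    (x : Fin l → ℝ) (y : Fin k → ℝ) :
    (A.mulVec x) ⬝ᵥ y = x ⬝ᵥ (Aᵀ.mulVec y) := by
  rw [dotProduct_comm, Matrix.dotProduct_mulVec, dotProduct_comm,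
    ← Matrix.mulVec_transpose]

/-- claims (a)–(b) of Theorem 1. Along trajectories of the adaptive error
model with a parameter adaptive law satisfying the tangent-cone projection inequality, the
Lyapunov function `V = eᵀPe + ‖θ̃‖²/γ` is nonincreasing on `[0, ∞)` and the tracking error is
bounded by `√(V(0)/λ_min(P))`. -/
theorem lyapunov_nonincreasing_error_bounded
    {n m p : ℕ} (Am P Q : Matrix (Fin n) (Fin n) ℝ) (hP : P.IsSymm)
    (hLyap : Amᵀ * P + P * Am = -Q)
    (hQ : ∀ x : EuclideanSpace ℝ (Fin n), 0 ≤ ⟪x, WithLp.toLp 2 (Q.mulVec x)⟫)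
    (B : Matrix (Fin n) (Fin m) ℝ) (γ : ℝ) (hγ : 0 < γ)
    (Φ : ℝ → Matrix (Fin m) (Fin p) ℝ)
    (e : ℝ → EuclideanSpace ℝ (Fin n)) (θ : ℝ → EuclideanSpace ℝ (Fin p))
    (he : Differentiable ℝ e) (hθ : Differentiable ℝ θ)
    (hdyn : ∀ t ≥ (0:ℝ),
      deriv e t = Am.mulVec (e t) + B.mulVec ((Φ t).mulVec (θ t)))
    (hadapt : ∀ t ≥ (0:ℝ),
      ⟪θ t, deriv θ t⟫ ≤ -γ * ⟪θ t, WithLp.toLp 2 (((Φ t)ᵀ * Bᵀ * P).mulVec (e t))⟫)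
    (V : ℝ → ℝ)
    (hV : ∀ t, V t = ⟪e t, WithLp.toLp 2 (P.mulVec (e t))⟫ + ‖θ t‖ ^ 2 / γ) :
    (∀ s t : ℝ, 0 ≤ s → s ≤ t → V t ≤ V s) ∧
    (∀ μ : ℝ, 0 < μ →
      (∀ x : EuclideanSpace ℝ (Fin n), μ * ‖x‖ ^ 2 ≤ ⟪x, WithLp.toLp 2 (P.mulVec x)⟫) →
      ∀ t ≥ (0:ℝ), ‖e t‖ ^ 2 ≤ V 0 / μ) := by
  set L : EuclideanSpace ℝ (Fin n) →L[ℝ] EuclideanSpace ℝ (Fin n) :=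
    LinearMap.toContinuousLinearMap (Matrix.toEuclideanLin P) with hLdef
  have hLapp : ∀ x : EuclideanSpace ℝ (Fin n), L x = WithLp.toLp 2 (P.mulVec x) := fun x => rfl
  have hVfun : V = fun t => ⟪e t, L (e t)⟫ + ⟪θ t, θ t⟫ / γ := by
    funext t
    rw [hV t, hLapp, real_inner_self_eq_norm_sq]
  have hVderiv : ∀ t : ℝ, HasDerivAt V
      ((⟪e t, L (deriv e t)⟫ + ⟪deriv e t, L (e t)⟫)
        + (⟪θ t, deriv θ t⟫ + ⟪deriv θ t, θ t⟫) / γ) t := by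
    intro t
    rw [hVfun]
    have h1 : HasDerivAt (fun t => ⟪e t, L (e t)⟫)
        (⟪e t, L (deriv e t)⟫ + ⟪deriv e t, L (e t)⟫) t :=
      HasDerivAt.inner ℝ (he t).hasDerivAt
        (L.hasFDerivAt.comp_hasDerivAt t (he t).hasDerivAt)
    have h2 : HasDerivAt (fun t => ⟪θ t, θ t⟫ / γ)
        ((⟪θ t, deriv θ t⟫ + ⟪deriv θ t, θ t⟫) / γ) t :=
      (HasDerivAt.inner ℝ (hθ t).hasDerivAt (hθ t).hasDerivAt).div_const γ
    exact h1.add h2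
  have hderiv_nonpos : ∀ t : ℝ, 0 ≤ t → deriv V t ≤ 0 := by
    intro t ht
    rw [(hVderiv t).deriv]
    have hdyn' := hdyn t ht
    have hadapt' := hadapt t ht
    have hPsymm : ∀ x y : Fin n → ℝ, x ⬝ᵥ P.mulVec y = y ⬝ᵥ P.mulVec x := by
      intro x y
      rw [dotProduct_comm, dot_mulVec_left, hP.eq]
    have hquad : ⟪e t, L (deriv e t)⟫ + ⟪deriv e t, L (e t)⟫
        = -⟪e t, WithLp.toLp 2 (Q.mulVec (e t))⟫ + 2 * ⟪θ t, WithLp.toLp 2 (((Φ t)ᵀ * Bᵀ * P).mulVec (e t))⟫ := by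
      simp only [hLapp, inner_eq_dot, WithLp.ofLp_toLp]
      rw [hdyn']
      rw [Matrix.mulVec_add, dotProduct_add, add_dotProduct]
      have hq1 : (Am.mulVec (e t : Fin n → ℝ)) ⬝ᵥ P.mulVec (e t)
            + (e t : Fin n → ℝ) ⬝ᵥ P.mulVec (Am.mulVec (e t : Fin n → ℝ))
          = -((e t : Fin n → ℝ) ⬝ᵥ Q.mulVec (e t)) := by
        rw [dot_mulVec_left, Matrix.mulVec_mulVec, Matrix.mulVec_mulVec,
          ← dotProduct_add, ← Matrix.add_mulVec, hLyap, Matrix.neg_mulVec,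
          dotProduct_neg]
      have hcross : (B.mulVec ((Φ t).mulVec (θ t : Fin p → ℝ))) ⬝ᵥ P.mulVec (e t)
          = (θ t : Fin p → ℝ) ⬝ᵥ ((Φ t)ᵀ * Bᵀ * P).mulVec (e t) := by
        rw [dot_mulVec_left, dot_mulVec_left, Matrix.mulVec_mulVec, Matrix.mulVec_mulVec,
          Matrix.mul_assoc]
      have hcross2 : (e t : Fin n → ℝ) ⬝ᵥ P.mulVec (B.mulVec ((Φ t).mulVec (θ t : Fin p → ℝ)))
          = (θ t : Fin p → ℝ) ⬝ᵥ ((Φ t)ᵀ * Bᵀ * P).mulVec (e t) := by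
        rw [hPsymm, hcross]
      rw [hcross, hcross2]
      linarith [hq1]
    have hcomm : ⟪deriv θ t, θ t⟫ = ⟪θ t, deriv θ t⟫ := real_inner_comm _ _
    have hθpart : (⟪θ t, deriv θ t⟫ + ⟪deriv θ t, θ t⟫) / γ
        ≤ -(2 * ⟪θ t, WithLp.toLp 2 (((Φ t)ᵀ * Bᵀ * P).mulVec (e t))⟫) := by
      rw [hcomm, div_le_iff₀ hγ]
      nlinarith [hadapt']
    have hQ' := hQ (e t)
    rw [hquad]
    linarith
  have hVdiff : Differentiable ℝ V := fun t => (hVderiv t).differentiableAt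
  have hanti : AntitoneOn V (Set.Ici (0:ℝ)) := by
    apply antitoneOn_of_deriv_nonpos (convex_Ici 0) hVdiff.continuous.continuousOn
      (hVdiff.differentiableOn)
    intro x hx
    rw [interior_Ici] at hx
    exact hderiv_nonpos x (le_of_lt hx)
  refine ⟨fun s t hs hst => hanti hs (hs.trans hst) hst, ?_⟩
  intro μ hμ hPmu t ht
  have h1 : μ * ‖e t‖ ^ 2 ≤ V t := by
    have := hPmu (e t)
    have h2 : 0 ≤ ‖θ t‖ ^ 2 / γ := div_nonneg (sq_nonneg _) hγ.le
    rw [hV t]; linarith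
  have h3 : V t ≤ V 0 := hanti (Set.mem_Ici.mpr le_rfl) ht ht
  rw [le_div_iff₀ hμ]
  linarith
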